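/- Let m, n ≥ 1 be integers. The cycle graph semiring S_{c_n} satisfies the identity c_m ≈ x³ if and only if n does not divide m. -/

import Mathlib

universe u

-- The underlying set of the graph semiring of a graph with vertex set `V`:
-- the vertices together with two extra elements `0` and `ω`.
inductive GS (V : Type u) : Type u where
  | zero : GS V
  | omega : GS V
  | vert : V → GS V

-- Multiplication of the graph semiring: `x·y = ω` if `x, y` are vertices joined by an
-- edge, and `x·y = 0` otherwise.
open Classical in
noncomputable def gsMul {V : Type u} (E : V → V → Prop) : GS V → GS V → GS V
  | GS.vert a, GS.vert b => if E a b then GS.omega else GS.zero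
  | _, _ => GS.zero

-- The flat addition of the graph semiring: `a + b = a` if `a = b`, else `0`.
open Classical in
noncomputable def gsAdd {V : Type u} (a b : GS V) : GS V :=
  if a = b then a else GS.zero

-- `gsSum f n = f 0 + f 1 + ⋯ + f n` (a sum of `n + 1` terms).
noncomputable def gsSum {V : Type u} (f : ℕ → GS V) : ℕ → GS V
  | 0 => f 0
  | n + 1 => gsAdd (gsSum f n) (f (n + 1))

-- `E` is a graph (in the sense of the paper): a directed graph with no isolated
-- vertices in which every vertex has out-degree at most 1 and in-degree at most 1.
def IsGraph {V : Type u} (E : V → V → Prop) : Prop :=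
  (∀ v : V, ∃ u : V, E v u ∨ E u v) ∧
  (∀ v a b : V, E v a → E v b → a = b) ∧
  (∀ v a b : V, E a v → E b v → a = b)

-- `v 0, v 1, …, v (m - 1)` is a path of the graph `E` with `m` vertices.
def IsPathOn {V : Type u} (E : V → V → Prop) (m : ℕ) (v : ℕ → V) : Prop :=
  (∀ i < m, ∀ j < m, v i = v j → i = j) ∧
  (∀ i : ℕ, i + 1 < m → E (v i) (v (i + 1)))

-- `v 0, v 1, …, v (m - 1)` is a cycle of the graph `E` of length `m`.
def IsCycleOn {V : Type u} (E : V → V → Prop) (m : ℕ) (v : ℕ → V) : Prop :=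
  1 ≤ m ∧
  (∀ i < m, ∀ j < m, v i = v j → i = j) ∧
  (∀ i : ℕ, i + 1 < m → E (v i) (v (i + 1))) ∧
  E (v (m - 1)) (v 0)

-- The edge relation of the cycle with vertex set `ZMod n`: edges `(i, i + 1)`.
def cycleE (n : ℕ) : ZMod n → ZMod n → Prop := fun i j => j = i + 1

-- The cycle graph semiring `S_{c_n}` satisfies the identity `c_m ≈ x³`:
-- for all `x, x_1, …, x_m` one has `x_1x_2 + x_2x_3 + ⋯ + x_{m-1}x_m + x_mx_1 = x·x·x`.
def cycleSatC (n m : ℕ) : Prop :=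
  ∀ (x : GS (ZMod n)) (g : ℕ → GS (ZMod n)),
    gsSum (fun i => gsMul (cycleE n) (g i) (g ((i + 1) % m))) (m - 1) =
      gsMul (cycleE n) (gsMul (cycleE n) x x) x


section Aux
variable {V : Type u}

lemma gsMul_zero_or_omega (E : V → V → Prop) (x y : GS V) :
    gsMul E x y = GS.zero ∨ gsMul E x y = GS.omega := by
  cases x <;> cases y <;> simp [gsMul]
  exact (em (E _ _)).symm

lemma gsMul_eq_omega {E : V → V → Prop} {x y : GS V} :
    gsMul E x y = GS.omega ↔ ∃ a b, x = GS.vert a ∧ y = GS.vert b ∧ E a b := by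
  cases x <;> cases y <;> simp [gsMul]

lemma rhs_zero (E : V → V → Prop) (x : GS V) :
    gsMul E (gsMul E x x) x = GS.zero := by
  rcases gsMul_zero_or_omega E x x with h | h <;> rw [h] <;> cases x <;> simp [gsMul]

lemma gsAdd_eq_omega {a b : GS V} : gsAdd a b = GS.omega ↔ a = GS.omega ∧ b = GS.omega := by
  constructor
  · intro h
    unfold gsAdd at h
    split at h
    · simp_all
    · exact absurd h (by simp)
  · rintro ⟨rfl, rfl⟩
    simp [gsAdd]

lemma gsAdd_zero_or_omega {a b : GS V} (ha : a = GS.zero ∨ a = GS.omega)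
    (hb : b = GS.zero ∨ b = GS.omega) : gsAdd a b = GS.zero ∨ gsAdd a b = GS.omega := by
  unfold gsAdd
  split <;> tauto

lemma gsSum_zero_or_omega {f : ℕ → GS V} (hf : ∀ i, f i = GS.zero ∨ f i = GS.omega) (k : ℕ) :
    gsSum f k = GS.zero ∨ gsSum f k = GS.omega := by
  induction k with
  | zero => exact hf 0
  | succ n ih => exact gsAdd_zero_or_omega ih (hf (n + 1))

lemma gsSum_eq_omega {f : ℕ → GS V} (k : ℕ) :
    gsSum f k = GS.omega ↔ ∀ i ≤ k, f i = GS.omega := by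
  induction k with
  | zero => simp [gsSum, Nat.le_zero]
  | succ n ih =>
    simp only [gsSum, gsAdd_eq_omega, ih]
    constructor
    · rintro ⟨h1, h2⟩ i hi
      rcases Nat.lt_or_ge i (n + 1) with h | h
      · exact h1 i (by omega)
      · have : i = n + 1 := by omega
        subst this; exact h2
    · intro h
      exact ⟨fun i hi => h i (by omega), h (n + 1) le_rfl⟩

end Aux

/-- For `m, n ≥ 1`, the cycle graph semiring `S_{c_n}` satisfies the
identity `c_m ≈ x³` iff `n` does not divide `m`. -/

theorem stmt_8 (m n : ℕ) (hm : 1 ≤ m) (hn : 1 ≤ n) :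
    cycleSatC n m ↔ ¬ (n ∣ m) := by
  haveI : NeZero n := ⟨by omega⟩
  constructor
  · intro hsat hdvd
    have h := hsat GS.zero (fun i => GS.vert (i : ZMod n))
    rw [rhs_zero] at h
    have homega : gsSum
        (fun i => gsMul (cycleE n) (GS.vert (i : ZMod n))
          (GS.vert ((((i + 1) % m : ℕ)) : ZMod n))) (m - 1) = GS.omega := by
      rw [gsSum_eq_omega]
      intro i hi
      rw [gsMul_eq_omega]
      refine ⟨_, _, rfl, rfl, ?_⟩
      show ((((i + 1) % m : ℕ)) : ZMod n) = (i : ZMod n) + 1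
      have hcast : ((((i + 1) % m : ℕ)) : ZMod n) = (((i + 1 : ℕ)) : ZMod n) :=
        (ZMod.natCast_eq_natCast_iff _ _ _).mpr ((Nat.mod_modEq (i + 1) m).of_dvd hdvd)
      rw [hcast]; push_cast; ring
    cases (homega.symm.trans h)
  · intro hnd x g
    rw [rhs_zero]
    rcases gsSum_zero_or_omega
        (f := fun i => gsMul (cycleE n) (g i) (g ((i + 1) % m)))
        (fun i => gsMul_zero_or_omega _ _ _) (m - 1) with h | h
    · exact h
    · exfalso
      rw [gsSum_eq_omega] at h
      obtain ⟨a, b, hga, hgb, hab⟩ := gsMul_eq_omega.mp (h 0 (by omega))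
      have key : ∀ i, i < m → g i = GS.vert (a + (i : ZMod n)) := by
        intro i
        induction i with
        | zero => intro _; simpa using hga
        | succ j ih =>
          intro hlt
          have hj : j < m := by omega
          obtain ⟨c, d, hc, hd, hcd⟩ := gsMul_eq_omega.mp (h j (by omega))
          rw [Nat.mod_eq_of_lt hlt] at hd
          have hc' : c = a + (j : ZMod n) := by
            have := (ih hj).symm.trans hc
            injection this with h'
            exact h'.symm
          have hcd' : d = c + 1 := hcd
          rw [hd, hcd', hc']
          push_cast
          ring_nf
      obtain ⟨c, d, hc, hd, hcd⟩ := gsMul_eq_omega.mp (h (m - 1) le_rfl)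
      have hm1 : (m - 1) + 1 = m := by omega
      rw [hm1, Nat.mod_self] at hd
      have hc' : c = a + ((m - 1 : ℕ) : ZMod n) := by
        have := (key (m - 1) (by omega)).symm.trans hc
        injection this with h'
        exact h'.symm
      have hd' : d = a := by
        have h0 : g 0 = GS.vert (a + ((0 : ℕ) : ZMod n)) := key 0 (by omega)
        have := h0.symm.trans hd
        injection this with h'
        simpa using h'.symm
      have hcd' : d = c + 1 := hcd
      have hmz : ((m : ℕ) : ZMod n) = 0 := by
        have heq : a = a + ((m - 1 : ℕ) : ZMod n) + 1 := by
          rw [← hc', ← hcd', hd']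
        have : (((m - 1 : ℕ) : ZMod n)) + 1 = 0 := by
          have := heq
          linear_combination -this
        calc ((m : ℕ) : ZMod n) = (((m - 1) + 1 : ℕ) : ZMod n) := by rw [hm1]
          _ = ((m - 1 : ℕ) : ZMod n) + 1 := by push_cast; ring
          _ = 0 := this
      exact hnd ((ZMod.natCast_eq_zero_iff m n).mp hmz)
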